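/- If a and b are odd and c is even, then the equation a·x² + b·x + c ≡ 0 (mod 2^n) has exactly two solutions in ℤ/2^nℤ, one even and one odd. -/

import Mathlib

section aux

variable {n : ℕ}

private lemma aux_even_or_odd (x : ZMod (2 ^ n)) : Even x ∨ Odd x := by
  obtain ⟨k, rfl⟩ := ZMod.intCast_surjective x
  rcases Int.even_or_odd k with ⟨r, rfl⟩ | ⟨r, rfl⟩
  · exact Or.inl ⟨(r : ZMod (2 ^ n)), by push_cast; ring⟩
  · exact Or.inr ⟨(r : ZMod (2 ^ n)), by push_cast; ring⟩

private lemma aux_not_even_odd (hn : 1 ≤ n) (x : ZMod (2 ^ n)) (he : Even x) (ho : Odd x) :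
    False := by
  have h2 : (2 : ℕ) ∣ 2 ^ n := dvd_pow_self 2 (by omega)
  let φ : ZMod (2 ^ n) →+* ZMod 2 := ZMod.castHom h2 (ZMod 2)
  obtain ⟨r, hr⟩ := he
  obtain ⟨s, hs⟩ := ho
  have h1 : φ x = 0 := by rw [hr]; simp [CharTwo.add_self_eq_zero]
  have h2' : φ x = 1 := by
    rw [hs]
    have : (2 : ZMod 2) = 0 := by decide
    simp only [map_add, map_mul, map_ofNat, map_one]
    rw [this]; ring
  rw [h1] at h2'
  exact one_ne_zero h2'.symm

private lemma aux_odd_isUnit (hn : 1 ≤ n) (w : ZMod (2 ^ n)) (hw : Odd w) :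
    IsUnit w := by
  have hne : NeZero (2 ^ n) := ⟨by positivity⟩
  have hval : ((w.val : ℕ) : ZMod (2 ^ n)) = w := ZMod.natCast_rightInverse w
  have hvodd : Odd w.val := by
    rcases Nat.even_or_odd w.val with he | ho
    · exfalso
      apply aux_not_even_odd hn w ?_ hw
      obtain ⟨r, hr⟩ := he
      exact ⟨(r : ZMod (2 ^ n)), by rw [← hval, hr]; push_cast; ring⟩
    · exact ho
  rw [← hval, ZMod.isUnit_iff_coprime]
  exact Nat.Coprime.pow_right n (Nat.coprime_two_right.mpr hvodd)

end aux

theorem stmt_5 (n : ℕ) (hn : 1 ≤ n) (a b c : ℤ)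
    (ha : Odd a) (hb : Odd b) (hc : Even c) :
    ∃ x y : ZMod (2 ^ n), x ≠ y ∧ Even x ∧ Odd y ∧
      (a : ZMod (2 ^ n)) * x ^ 2 + b * x + c = 0 ∧
      (a : ZMod (2 ^ n)) * y ^ 2 + b * y + c = 0 ∧
      ∀ z : ZMod (2 ^ n), (a : ZMod (2 ^ n)) * z ^ 2 + b * z + c = 0 → z = x ∨ z = y := by
  have hne : NeZero (2 ^ n) := ⟨by positivity⟩
  set R := ZMod (2 ^ n) with hR
  set f : R → R := fun x => (a : R) * x ^ 2 + (b : R) * x + (c : R) with hf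
  obtain ⟨p, hp⟩ := ha
  obtain ⟨q, hq⟩ := hb
  obtain ⟨d, hd⟩ := hc
  -- key cancellation lemma
  have key : ∀ u v : R, Even (u + v) → f u = f v → u = v := by
    rintro u v ⟨r, hr⟩ huv
    have hwodd : Odd ((a : R) * (u + v) + (b : R)) :=
      ⟨(a : R) * r + (q : R), by rw [hr, hq, Int.cast_add, Int.cast_mul]; push_cast; ring⟩
    have hwu : IsUnit ((a : R) * (u + v) + (b : R)) := aux_odd_isUnit hn _ hwodd
    have hprod : (u - v) * ((a : R) * (u + v) + (b : R)) = 0 := by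
      have h : (u - v) * ((a : R) * (u + v) + (b : R)) = f u - f v := by rw [hf]; ring
      rw [h, huv, sub_self]
    exact sub_eq_zero.mp ((hwu.mul_left_eq_zero).mp hprod)
  -- f maps even to even
  have fmape : ∀ u : R, Even u → Even (f u) := by
    rintro u ⟨r, rfl⟩
    exact ⟨(a : R) * (2 * r ^ 2) + (b : R) * r + (d : R), by rw [hf, hd]; push_cast; ring⟩
  -- f maps odd to even
  have fmapo : ∀ u : R, Odd u → Even (f u) := by
    rintro u ⟨s, rfl⟩
    refine ⟨(a : R) * (2 * s ^ 2 + 2 * s) + (b : R) * s + (d : R) + (p : R) + (q : R) + 1, ?_⟩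
    rw [hf, hd, hp, hq]; push_cast; ring
  -- existence of the even root via injective-implies-surjective on the even subtype
  classical
  let E := {u : R // Even u}
  have hEfin : Finite E := Subtype.finite
  let F : E → E := fun u => ⟨f u.1, fmape u.1 u.2⟩
  have hFinj : Function.Injective F := by
    rintro ⟨u, hu⟩ ⟨v, hv⟩ huv
    have : f u = f v := congrArg Subtype.val huv
    exact Subtype.ext (key u v (hu.add hv) this)
  have hFsurj : Function.Surjective F := Finite.injective_iff_surjective.mp hFinj
  obtain ⟨⟨x, hxe⟩, hx⟩ := hFsurj ⟨0, Even.zero⟩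
  have hfx : f x = 0 := congrArg Subtype.val hx
  -- odd root: use G : E → E, G u = f (u + 1)
  have hodd1 : ∀ u : R, Even u → Odd (u + 1) := by
    rintro u ⟨r, rfl⟩; exact ⟨r, by ring⟩
  let G : E → E := fun u => ⟨f (u.1 + 1), fmapo _ (hodd1 u.1 u.2)⟩
  have hGinj : Function.Injective G := by
    rintro ⟨u, hu⟩ ⟨v, hv⟩ huv
    have h1 : f (u + 1) = f (v + 1) := congrArg Subtype.val huv
    have h2 : Even ((u + 1) + (v + 1)) := by
      obtain ⟨r, rfl⟩ := hu; obtain ⟨s, rfl⟩ := hv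
      exact ⟨r + s + 1, by ring⟩
    have := key _ _ h2 h1
    exact Subtype.ext (by linear_combination this)
  have hGsurj : Function.Surjective G := Finite.injective_iff_surjective.mp hGinj
  obtain ⟨⟨w, hwe⟩, hw⟩ := hGsurj ⟨0, Even.zero⟩
  set y := w + 1 with hy
  have hyo : Odd y := hodd1 w hwe
  have hfy : f y = 0 := congrArg Subtype.val hw
  refine ⟨x, y, ?_, hxe, hyo, hfx, hfy, ?_⟩
  · intro heq
    exact aux_not_even_odd hn x hxe (heq ▸ hyo)
  · intro z hz
    rcases aux_even_or_odd z with hze | hzo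
    · exact Or.inl (key z x (hze.add hxe) (by show f z = f x; rw [hfx]; exact hz))
    · refine Or.inr (key z y ?_ (by show f z = f y; rw [hfy]; exact hz))
      obtain ⟨r, rfl⟩ := hzo; obtain ⟨s, hs⟩ := hyo
      exact ⟨r + s + 1, by rw [hs]; ring⟩
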